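/- Let (x, y) be a rational point with y² = x³ − 36x, and suppose t := x² − 12x − 36 ≠ 0. Set V = x² + 12x − 36 and U = 4y(x² + 36)/t. Then (U + t)⁴ + (U − t)⁴ = 2(U⁴ + V⁴), i.e., (U + t, U − t, U, V) is a rational solution of the Diophantine equation X⁴ + Y⁴ = 2(U⁴ + V⁴). -/

import Mathlib

/-- A rational point `(x, y)` on `E₆ : y² = x³ − 36x` with `t = x² − 12x − 36 ≠ 0`
yields, via `V = x² + 12x − 36` and `U = 4y(x² + 36)/t`, a rational solution
`(U + t, U − t, U, V)` of `X⁴ + Y⁴ = 2(U⁴ + V⁴)`. -/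
theorem solution_from_E6 (x y : ℚ) (h : y ^ 2 = x ^ 3 - 36 * x)
    (ht : x ^ 2 - 12 * x - 36 ≠ 0) :
    (4 * y * (x ^ 2 + 36) / (x ^ 2 - 12 * x - 36) + (x ^ 2 - 12 * x - 36)) ^ 4 +
      (4 * y * (x ^ 2 + 36) / (x ^ 2 - 12 * x - 36) - (x ^ 2 - 12 * x - 36)) ^ 4 =
    2 * ((4 * y * (x ^ 2 + 36) / (x ^ 2 - 12 * x - 36)) ^ 4 +
      (x ^ 2 + 12 * x - 36) ^ 4) := by
  have ht2 : x * (x - 12) - 36 ≠ 0 := by convert ht using 1; ring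
  field_simp
  linear_combination (192 * (x ^ 2 - 12 * x - 36) ^ 4 * (x ^ 2 + 36) ^ 2) * h
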